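/- Let X be an alphabet having n ≥ 2 letters, let g: X* → X* be a primitive looping morphism, and let x ∈ X be a letter such that g^ω(x) exists. Then there exists a primitive word u ∈ X* such that g^ω(x) = u^ω. -/

import Mathlib

open Filter Set

variable {X : Type*}

/-- Apply the morphism with letter images `g` to a word. -/
def applyM (g : X → List X) (w : List X) : List X := w.flatMap g

/-- `iterM g k w` is `g^k(w)`. -/
def iterM (g : X → List X) (k : ℕ) (w : List X) : List X := (applyM g)^[k] w

/-- The letter map of the composition `g ∘ h` (first `h`, then `g`). -/
def compM (g h : X → List X) : X → List X := fun a => applyM g (h a)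

/-- The letter map of the power `g^k`. -/
def powM (g : X → List X) (k : ℕ) : X → List X := fun a => iterM g k [a]

/-- A morphism is primitive if some power maps every letter to a word containing every letter. -/
def Primitive (g : X → List X) : Prop := ∃ k : ℕ, 0 < k ∧ ∀ a b : X, a ∈ iterM g k [b]

/-- `Mg g` is the maximal length of the image of a letter. -/
def Mg [Fintype X] (g : X → List X) : ℕ := Finset.univ.sup fun x => (g x).length

/-- A morphism is growing if the lengths of iterated images of every letter tend to infinity. -/
def Growing (g : X → List X) : Prop :=
  ∀ x : X, Tendsto (fun i => (iterM g i [x]).length) atTop atTop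

/-- `w` is a (finite) prefix of the infinite word `s`. -/
def IsPrefI (w : List X) (s : ℕ → X) : Prop := ∀ i (h : i < w.length), w[i]'h = s i

/-- `v` is a factor of the infinite word `s`. -/
def IsFactorI (v : List X) (s : ℕ → X) : Prop :=
  ∃ j : ℕ, ∀ i (h : i < v.length), v[i]'h = s (j + i)

/-- `g^ω(x)` exists. -/
def OmegaExists (g : X → List X) (x : X) : Prop :=
  [x] <+: g x ∧ Tendsto (fun i => (iterM g i [x]).length) atTop atTop

/-- `s = g^ω(x)`. -/
def IsOmega (g : X → List X) (x : X) (s : ℕ → X) : Prop :=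
  OmegaExists g x ∧ ∀ i : ℕ, IsPrefI (iterM g i [x]) s

/-- `s = u^ω` for the nonempty word `u`. -/
def IsPeriodicWord (s : ℕ → X) (u : List X) : Prop :=
  u ≠ [] ∧ ∀ (i : ℕ) (h : i % u.length < u.length), s i = u[i % u.length]'h

/-- A morphism is looping. -/
def Looping (g : X → List X) : Prop :=
  ∃ k : ℕ, 0 < k ∧ ∃ x : X, ∃ u : List X, ∃ s : ℕ → X,
    IsOmega (powM g k) x s ∧ IsPeriodicWord s u

/-- A morphism is loop-free if it is not looping. -/
def LoopFree (g : X → List X) : Prop := ¬ Looping g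

/-- `p` is a period of `u`. -/
def HasPeriod (u : List X) (p : ℕ) : Prop :=
  0 < p ∧ ∀ i : ℕ, i + p < u.length → u[i + p]? = u[i]?

/-- The smallest period of `u`. -/
noncomputable def PER (u : List X) : ℕ := sInf {p | HasPeriod u p}

/-- A primitive word: nonempty and not a proper power of a shorter word. -/
def PrimitiveWord (u : List X) : Prop :=
  u ≠ [] ∧ ¬∃ (v : List X) (j : ℕ), 2 ≤ j ∧ v.length < u.length ∧
    u = (List.replicate j v).flatten

/-- `COMP g h` : the set of words whose images under `g` and `h` are prefix-comparable. -/
def COMP (g h : X → List X) : Set (List X) :=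
  {w | ∃ u₁ u₂ : List X, applyM g w ++ u₁ = applyM h w ++ u₂}

/-- `BAL g h`. -/
noncomputable def BAL (g h : X → List X) : ℕ∞ :=
  ⨆ (x : X) (k : ℕ),
    ((((applyM g (iterM g k [x])).length : ℤ) -
      ((applyM h (iterM g k [x])).length : ℤ)).natAbs : ℕ∞)

/-- The set of factors of length `q` of the word `w`. -/
def Fq (q : ℕ) (w : List X) : Set (List X) := {v | v.length = q ∧ v <:+: w}

/-- The set of factors of length `q` of words of `L`. -/
def FqL (q : ℕ) (L : Set (List X)) : Set (List X) := ⋃ w ∈ L, Fq q w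

/-- `A n = ⌊9 n³ √(n log n)⌋`. -/
noncomputable def Abound (n : ℕ) : ℕ := ⌊9 * (n : ℝ)^3 * Real.sqrt (n * Real.log n)⌋₊

section AuxLemmas

variable {X : Type*}

lemma applyM_append' (g : X → List X) (u v : List X) :
    applyM g (u ++ v) = applyM g u ++ applyM g v := by
  simp [applyM]

lemma iterM_nil' (g : X → List X) (m : ℕ) : iterM g m ([] : List X) = [] := by
  induction m with
  | zero => rfl
  | succ m ih =>
      show (applyM g)^[m + 1] [] = []
      rw [Function.iterate_succ_apply']
      show applyM g (iterM g m []) = []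
      rw [ih]; rfl

lemma iterM_append' (g : X → List X) (m : ℕ) (u v : List X) :
    iterM g m (u ++ v) = iterM g m u ++ iterM g m v := by
  induction m with
  | zero => rfl
  | succ m ih =>
      show (applyM g)^[m + 1] _ = (applyM g)^[m+1] _ ++ (applyM g)^[m+1] _
      rw [Function.iterate_succ_apply', Function.iterate_succ_apply',
        Function.iterate_succ_apply']
      show applyM g (iterM g m (u ++ v)) = applyM g (iterM g m u) ++ applyM g (iterM g m v)
      rw [ih, applyM_append']

lemma iterM_add' (g : X → List X) (a b : ℕ) (w : List X) :
    iterM g (a + b) w = iterM g a (iterM g b w) := by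
  simp [iterM, Function.iterate_add_apply]

lemma applyM_powM' (g : X → List X) (k : ℕ) (w : List X) :
    applyM (powM g k) w = iterM g k w := by
  induction w with
  | nil => simp [applyM, iterM_nil']
  | cons a t ih =>
      have h1 : (a :: t : List X) = [a] ++ t := rfl
      rw [h1, applyM_append', iterM_append', ih]
      congr 1
      simp [applyM, powM]

lemma iterM_powM' (g : X → List X) (k m : ℕ) (w : List X) :
    iterM (powM g k) m w = iterM g (k * m) w := by
  induction m with
  | zero => simp [iterM]
  | succ m ih =>
      show (applyM (powM g k))^[m + 1] w = _
      rw [Function.iterate_succ_apply']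
      show applyM (powM g k) (iterM (powM g k) m w) = _
      rw [ih, applyM_powM', ← iterM_add']
      congr 1
      ring

lemma prim_nonerasing' {g : X → List X} (hg : Primitive g) : ∀ b, g b ≠ [] := by
  obtain ⟨K, hK, hall⟩ := hg
  intro b hb
  have h1 : iterM g K [b] = [] := by
    obtain ⟨K', rfl⟩ : ∃ K', K = K' + 1 := ⟨K - 1, (Nat.succ_pred_eq_of_pos hK).symm⟩
    show (applyM g)^[K' + 1] [b] = []
    rw [Function.iterate_succ_apply]
    have h2 : applyM g [b] = [] := by simp [applyM, hb]
    rw [h2]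
    exact iterM_nil' g K'
  have h3 := hall b b
  rw [h1] at h3
  exact absurd h3 List.not_mem_nil

lemma iterM_ne_nil' {g : X → List X} (hne : ∀ b, g b ≠ []) (m : ℕ) {w : List X}
    (hw : w ≠ []) : iterM g m w ≠ [] := by
  induction m with
  | zero => exact hw
  | succ m ih =>
      show (applyM g)^[m + 1] w ≠ []
      rw [Function.iterate_succ_apply']
      show applyM g (iterM g m w) ≠ []
      cases h : iterM g m w with
      | nil => exact absurd h ih
      | cons a t =>
          show (a :: t).flatMap g ≠ []
          rw [List.flatMap_cons]
          exact List.append_ne_nil_of_left_ne_nil (hne a) _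

lemma mem_iterM_add' {g : X → List X} (hne : ∀ b, g b ≠ []) {K : ℕ}
    (hall : ∀ a b, a ∈ iterM g K [b]) (x : X) (m : ℕ) (y : X) :
    x ∈ iterM g (K + m) [y] := by
  rw [iterM_add']
  cases h : iterM g m [y] with
  | nil => exact absurd h (iterM_ne_nil' hne m (by simp))
  | cons b t =>
      have h1 : (b :: t : List X) = [b] ++ t := rfl
      rw [h1, iterM_append']
      exact List.mem_append.2 (Or.inl (hall x b))

lemma period_iterate' {s : ℕ → X} {q : ℕ} (hq : ∀ t, s (t + q) = s t) :
    ∀ j t, s (t + q * j) = s t := by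
  intro j
  induction j with
  | zero => simp
  | succ j ih =>
      intro t
      have h1 : t + q * (j + 1) = (t + q * j) + q := by ring
      rw [h1, hq, ih]

lemma period_mod' {s : ℕ → X} {q : ℕ} (hq : ∀ t, s (t + q) = s t) (i : ℕ) :
    s i = s (i % q) := by
  conv_lhs => rw [← Nat.mod_add_div i q]
  exact period_iterate' hq _ _

lemma flatten_replicate_length' (v : List X) (j : ℕ) :
    (List.replicate j v).flatten.length = j * v.length := by
  induction j with
  | zero => simp
  | succ j ih =>
      rw [List.replicate_succ, List.flatten_cons, List.length_append, ih]
      ring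

lemma flatten_replicate_getElem' (v : List X) (j i : ℕ) (h : i < j * v.length)
    (h1 : i < (List.replicate j v).flatten.length) (h2 : i % v.length < v.length) :
    (List.replicate j v).flatten[i]'h1 = v[i % v.length]'h2 := by
  induction j generalizing i with
  | zero => omega
  | succ j ih =>
      have hL : 0 < v.length := (Nat.zero_le _).trans_lt h2
      simp only [List.replicate_succ, List.flatten_cons]
      by_cases hi : i < v.length
      · rw [List.getElem_append_left hi]
        congr 1
        exact (Nat.mod_eq_of_lt hi).symm
      · push_neg at hi
        rw [List.getElem_append_right hi]
        have h' : i - v.length < j * v.length := by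
          have := Nat.add_one_mul j v.length
          omega
        have h1' : i - v.length < (List.replicate j v).flatten.length := by
          rw [flatten_replicate_length']; exact h'
        have hmod : (i - v.length) % v.length = i % v.length := by
          conv_rhs => rw [← Nat.sub_add_cancel hi, Nat.add_mod_right]
        rw [ih (i - v.length) h' h1']
        · congr 1
        · rw [hmod]; exact h2

end AuxLemmas

lemma getElem_middle' {A Q B : List X} (t : ℕ) (ht : t < Q.length)
    (h : A.length + t < (A ++ (Q ++ B)).length) :
    (A ++ (Q ++ B))[A.length + t]'h = Q[t]'ht := by
  rw [List.getElem_append_right (Nat.le_add_right _ _)]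
  simp only [Nat.add_sub_cancel_left]
  rw [List.getElem_append_left ht]

lemma getElem_idx_congr' (l : List X) {i j : ℕ} (hij : i = j) (hi : i < l.length)
    (hj : j < l.length) : l[i]'hi = l[j]'hj := by subst hij; rfl

/-- If `g` is a primitive looping morphism on an alphabet with
`n ≥ 2` letters and `g^ω(x)` exists, then `g^ω(x) = u^ω` for some primitive word `u`. -/
theorem looping_omega_is_periodic {X : Type*} [Fintype X]
    (n : ℕ) (hn : n = Fintype.card X) (hn2 : 2 ≤ n)
    (g : X → List X) (hg : Primitive g) (hloop : Looping g)
    (x : X) (s : ℕ → X) (hs : IsOmega g x s) :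
    ∃ u : List X, PrimitiveWord u ∧ IsPeriodicWord s u := by
  classical
  obtain ⟨k, hk, y, v, s', hs', hv⟩ := hloop
  obtain ⟨K, hK, hall⟩ := hg
  have hne := prim_nonerasing' ⟨K, hK, hall⟩
  have hp0 : 0 < v.length := List.length_pos_iff.2 hv.1
  -- x occurs in a prefix of s'
  have hxmem : x ∈ iterM (powM g k) K [y] := by
    rw [iterM_powM']
    have hk1 : K ≤ k * K := Nat.le_mul_of_pos_left K hk
    have he : k * K = K + (k * K - K) := by omega
    rw [he]
    exact mem_iterM_add' hne hall x _ y
  obtain ⟨A, B, hAB⟩ := List.append_of_mem hxmem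
  -- the key computation
  have key : ∀ m t, t < (iterM g (k * m) [x]).length →
      ∀ hmod : ((iterM (powM g k) m A).length + t) % v.length < v.length,
      s t = v[((iterM (powM g k) m A).length + t) % v.length]'hmod := by
    intro m t ht hmod
    have hQ : iterM (powM g k) m [x] = iterM g (k * m) [x] := iterM_powM' g k m [x]
    have hP : iterM (powM g k) (m + K) [y]
        = iterM (powM g k) m A ++ (iterM (powM g k) m [x] ++ iterM (powM g k) m B) := by
      rw [iterM_add', hAB]
      rw [show A ++ x :: B = A ++ ([x] ++ B) from rfl]
      rw [iterM_append', iterM_append']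
    have htQ : t < (iterM (powM g k) m [x]).length := by rw [hQ]; exact ht
    have hlt : (iterM (powM g k) m A).length + t
        < (iterM (powM g k) (m + K) [y]).length := by
      rw [hP, List.length_append, List.length_append]
      omega
    have h2 : s' ((iterM (powM g k) m A).length + t)
        = (iterM (powM g k) (m + K) [y])[(iterM (powM g k) m A).length + t]'hlt :=
      (hs'.2 (m + K) _ hlt).symm
    have h3 : (iterM (powM g k) (m + K) [y])[(iterM (powM g k) m A).length + t]'hlt
        = (iterM g (k * m) [x])[t]'ht := by
      rw [List.getElem_of_eq hP, getElem_middle' t htQ, List.getElem_of_eq hQ]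
    have h4 : s t = (iterM g (k * m) [x])[t]'ht := (hs.2 (k * m) t ht).symm
    have h5 := hv.2 ((iterM (powM g k) m A).length + t) hmod
    rw [h4, ← h3, ← h2, h5]
  -- s has pure period v.length
  have hper : ∀ t, s (t + v.length) = s t := by
    intro t
    obtain ⟨N, hN⟩ := Filter.eventually_atTop.1
      (Filter.tendsto_atTop.1 hs.1.2 (t + v.length + 1))
    have hlen : t + v.length + 1 ≤ (iterM g (k * N) [x]).length :=
      hN (k * N) (Nat.le_mul_of_pos_left N hk)
    have ht1 : t < (iterM g (k * N) [x]).length := by omega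
    have ht2 : t + v.length < (iterM g (k * N) [x]).length := by omega
    rw [key N t ht1 (Nat.mod_lt _ hp0), key N (t + v.length) ht2 (Nat.mod_lt _ hp0)]
    exact getElem_idx_congr' v
      (by rw [show (iterM (powM g k) N A).length + (t + v.length)
          = ((iterM (powM g k) N A).length + t) + v.length from by ring,
          Nat.add_mod_right]) _ _
  -- minimal pure period
  set S : Set ℕ := {q | 0 < q ∧ ∀ t, s (t + q) = s t} with hSdef
  have hpS : v.length ∈ S := ⟨hp0, hper⟩
  obtain ⟨hq0pos, hq0per⟩ := Nat.sInf_mem (⟨_, hpS⟩ : S.Nonempty)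
  set q0 := sInf S with hq0def
  set u : List X := (List.range q0).map s with hudef
  have hulen : u.length = q0 := by simp [hudef]
  have hu : ∀ i (h : i < u.length), u[i]'h = s i := by
    intro i h
    simp [hudef]
  have hune : u ≠ [] := by
    intro h
    rw [← List.length_eq_zero_iff] at h
    omega
  have hperiodic : IsPeriodicWord s u := by
    refine ⟨hune, fun i h => ?_⟩
    rw [hu _ h]
    simp only [hulen]
    exact period_mod' hq0per i
  refine ⟨u, ⟨hune, ?_⟩, hperiodic⟩
  rintro ⟨v', jj, hjj, hvlt, hue⟩
  have hq0eq : q0 = jj * v'.length := by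
    rw [← hulen, hue, flatten_replicate_length']
  have hv'pos : 0 < v'.length := by
    rcases Nat.eq_zero_or_pos v'.length with h0 | h
    · rw [h0, Nat.mul_zero] at hq0eq; omega
    · exact h
  have hv'lt : v'.length < q0 := by rw [← hulen]; exact hvlt
  have hsm : ∀ m (hm : m % v'.length < v'.length), s m = v'[m % v'.length]'hm := by
    intro m hm
    have h2 : m % q0 < q0 := Nat.mod_lt _ hq0pos
    have h2' : m % q0 < u.length := by omega
    have h2'' : m % q0 < jj * v'.length := by omega
    have h4 : (m % q0) % v'.length = m % v'.length :=
      Nat.mod_mod_of_dvd m ⟨jj, by rw [hq0eq, mul_comm]⟩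
    calc s m = s (m % q0) := period_mod' hq0per m
      _ = u[m % q0]'h2' := (hu _ h2').symm
      _ = (List.replicate jj v').flatten[m % q0]'(by rw [← hue]; exact h2') :=
          List.getElem_of_eq hue h2'
      _ = v'[(m % q0) % v'.length]'(Nat.mod_lt _ hv'pos) :=
          flatten_replicate_getElem' v' jj (m % q0) h2'' _ _
      _ = v'[m % v'.length]'hm := getElem_idx_congr' v' h4 _ _
  have hmem : v'.length ∈ S := by
    refine ⟨hv'pos, fun t => ?_⟩
    rw [hsm (t + v'.length) (Nat.mod_lt _ hv'pos), hsm t (Nat.mod_lt _ hv'pos)]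
    exact getElem_idx_congr' v' (Nat.add_mod_right t v'.length) _ _
  have := Nat.sInf_le hmem
  omega
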